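/- For every x ∈ ℝ², every invertible real 2×2 matrix A, and every ξ ∈ L²(ℝ² × ℝ; ℂ), one has ∫_{ℝ²×ℝ} |(σ₂[x,A]ξ)(ω, ω₃)|² dω dω₃ = ∫_{ℝ²×ℝ} |ξ(ω, ω₃)|² dω dω₃. In particular σ₂[x,A] is a unitary operator on L²(ℝ² × ℝ; ℂ). -/

import Mathlib

open MeasureTheory Matrix
open scoped ENNReal

noncomputable section

/-- `‖ω‖²`, the squared Euclidean norm of the row vector `ω`. -/
def nsq (ω : Fin 2 → ℝ) : ℝ := ω 0 ^ 2 + ω 1 ^ 2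

/-- `u_{ω,A}` for a row vector `ω = (ω 0, ω 1)` and a matrix
`A = [[a, b], [c, d]] = [[A 0 0, A 0 1], [A 1 0, A 1 1]]`. -/
def uu (ω : Fin 2 → ℝ) (A : Matrix (Fin 2) (Fin 2) ℝ) : ℝ :=
  ((A 0 0 * A 1 0 + A 0 1 * A 1 1) * (ω 0 ^ 2 - ω 1 ^ 2)
      - (A 0 0 ^ 2 + A 0 1 ^ 2 - A 1 0 ^ 2 - A 1 1 ^ 2) * (ω 0 * ω 1))
    / ((A 0 0 * ω 0 + A 1 0 * ω 1) ^ 2 + (A 0 1 * ω 0 + A 1 1 * ω 1) ^ 2)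

/-- `v_{ω,A}`. -/
def vv (ω : Fin 2 → ℝ) (A : Matrix (Fin 2) (Fin 2) ℝ) : ℝ :=
  ((A 0 0 * A 1 1 - A 0 1 * A 1 0) * (ω 0 ^ 2 + ω 1 ^ 2))
    / ((A 0 0 * ω 0 + A 1 0 * ω 1) ^ 2 + (A 0 1 * ω 0 + A 1 1 * ω 1) ^ 2)

lemma nsq_pos {ω : Fin 2 → ℝ} (h : ω ≠ 0) : 0 < nsq ω := by
  have h0 : ω 0 ≠ 0 ∨ ω 1 ≠ 0 := by
    by_contra hc
    push_neg at hc
    exact h (funext fun i => by fin_cases i <;> simp [hc.1, hc.2])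
  unfold nsq
  rcases h0 with h0 | h0 <;>
    nlinarith [sq_nonneg (ω 0), sq_nonneg (ω 1), sq_pos_of_ne_zero h0]
lemma nsq_vecMul (ω : Fin 2 → ℝ) (A : Matrix (Fin 2) (Fin 2) ℝ) :
    nsq (vecMul ω A) =
      (A 0 0 * ω 0 + A 1 0 * ω 1) ^ 2 + (A 0 1 * ω 0 + A 1 1 * ω 1) ^ 2 := by
  simp [nsq, Matrix.vecMul, dotProduct, Fin.sum_univ_two]
  ring
lemma vecMul_ne_zero {ω : Fin 2 → ℝ} {A : Matrix (Fin 2) (Fin 2) ℝ}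
    (hA : A.det ≠ 0) (h : ω ≠ 0) : vecMul ω A ≠ 0 := by
  intro hz
  apply h
  have := congrArg (fun w => vecMul w A⁻¹) hz
  simpa [Matrix.vecMul_vecMul, Matrix.mul_nonsing_inv A (isUnit_iff_ne_zero.mpr hA)]
    using this
lemma vv_eq (ω : Fin 2 → ℝ) (A : Matrix (Fin 2) (Fin 2) ℝ) :
    vv ω A = A.det * nsq ω / nsq (vecMul ω A) := by
  rw [vv, Matrix.det_fin_two, nsq_vecMul, nsq]
lemma vv_ne_zero {ω : Fin 2 → ℝ} {A : Matrix (Fin 2) (Fin 2) ℝ}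
    (hA : A.det ≠ 0) (h : ω ≠ 0) : vv ω A ≠ 0 := by
  rw [vv_eq]
  have h1 := nsq_pos h
  have h2 := nsq_pos (vecMul_ne_zero hA h)
  positivity
lemma measurable_vv (A : Matrix (Fin 2) (Fin 2) ℝ) :
    Measurable (fun ω => vv ω A) := by
  unfold vv
  fun_prop
lemma measurable_vecMulA (A : Matrix (Fin 2) (Fin 2) ℝ) :
    Measurable (fun ω : Fin 2 → ℝ => vecMul ω A) := by
  have : (fun ω : Fin 2 → ℝ => vecMul ω A) = ⇑(Matrix.toLin' Aᵀ) := by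
    funext ω
    rw [Matrix.toLin'_apply, Matrix.mulVec_transpose]
  rw [this]
  exact (LinearMap.continuous_on_pi _).measurable
lemma map_vecMulA (A : Matrix (Fin 2) (Fin 2) ℝ) (hA : A.det ≠ 0) :
    Measure.map (fun ω : Fin 2 → ℝ => vecMul ω A) volume
      = ENNReal.ofReal |A.det⁻¹| • volume := by
  have : (fun ω : Fin 2 → ℝ => vecMul ω A) = ⇑(Matrix.toLin' Aᵀ) := by
    funext ω
    rw [Matrix.toLin'_apply, Matrix.mulVec_transpose]
  rw [this, Real.map_matrix_volume_pi_eq_smul_volume_pi (by simpa using hA),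
    Matrix.det_transpose, abs_inv]
lemma qmp_vecMulA (A : Matrix (Fin 2) (Fin 2) ℝ) (hA : A.det ≠ 0) :
    Measure.QuasiMeasurePreserving (fun ω : Fin 2 → ℝ => vecMul ω A)
      volume volume :=
  ⟨measurable_vecMulA A, by
    rw [map_vecMulA A hA]; exact Measure.smul_absolutelyContinuous⟩
lemma scalar_id {ω : Fin 2 → ℝ} {A : Matrix (Fin 2) (Fin 2) ℝ}
    (hA : A.det ≠ 0) (h : ω ≠ 0) :
    ENNReal.ofReal ((|A.det| * Real.sqrt (nsq ω) / Real.sqrt (nsq (vecMul ω A))) ^ 2)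
        * ENNReal.ofReal |(vv ω A)⁻¹| = ENNReal.ofReal |A.det| := by
  have h1 := nsq_pos h
  have h2 := nsq_pos (vecMul_ne_zero hA h)
  rw [← ENNReal.ofReal_mul (by positivity)]
  congr 1
  rw [vv_eq, abs_inv, abs_div, abs_mul, abs_of_pos h1, abs_of_pos h2]
  rw [div_pow, mul_pow, Real.sq_sqrt h1.le, Real.sq_sqrt h2.le, sq_abs]
  have hd : |A.det| ≠ 0 := abs_ne_zero.mpr hA
  have hdd : A.det ^ 2 = |A.det| ^ 2 := (sq_abs _).symm
  field_simp
  rw [hdd]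
lemma ae_ne_zero : ∀ᵐ ω : Fin 2 → ℝ, ω ≠ 0 := by
  rw [ae_iff]
  have h : {ω : Fin 2 → ℝ | ¬ ω ≠ 0} = {0} := by ext ω; simp
  rw [h]
  exact measure_singleton 0
lemma measurable_nsq : Measurable nsq := by
  unfold nsq; fun_prop
lemma T_preimage_null (A : Matrix (Fin 2) (Fin 2) ℝ) (hA : A.det ≠ 0)
    {s : Set ((Fin 2 → ℝ) × ℝ)} (hs : MeasurableSet s) (h0 : volume s = 0) :
    volume ((fun p : (Fin 2 → ℝ) × ℝ => (vecMul p.1 A, p.2 * vv p.1 A)) ⁻¹' s) = 0 := by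
  have hTm : Measurable (fun p : (Fin 2 → ℝ) × ℝ => (vecMul p.1 A, p.2 * vv p.1 A)) :=
    ((measurable_vecMulA A).comp measurable_fst).prodMk
      (measurable_snd.mul ((measurable_vv A).comp measurable_fst))
  rw [Measure.volume_eq_prod] at h0 ⊢
  have hsl : (fun η => volume (Prod.mk η ⁻¹' s)) =ᵐ[volume] 0 :=
    (Measure.measure_prod_null hs).mp h0
  have haeω : ∀ᵐ ω : Fin 2 → ℝ, volume (Prod.mk (vecMul ω A) ⁻¹' s) = 0 := by
    have hsl' : ∀ᵐ η : Fin 2 → ℝ, volume (Prod.mk η ⁻¹' s) = 0 := by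
      filter_upwards [hsl] with η hη; simpa using hη
    rw [ae_iff]
    exact (qmp_vecMulA A hA).preimage_null
      (s := {η : Fin 2 → ℝ | ¬ volume (Prod.mk η ⁻¹' s) = 0}) (ae_iff.mp hsl')
  rw [Measure.prod_apply (hTm hs)]
  have h2 : ∀ᵐ ω : Fin 2 → ℝ,
      volume (Prod.mk ω ⁻¹' ((fun p : (Fin 2 → ℝ) × ℝ =>
        (vecMul p.1 A, p.2 * vv p.1 A)) ⁻¹' s)) = 0 := by
    filter_upwards [haeω, ae_ne_zero] with ω h1 h2
    have hv : vv ω A ≠ 0 := vv_ne_zero hA h2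
    have heq : Prod.mk ω ⁻¹' ((fun p : (Fin 2 → ℝ) × ℝ =>
        (vecMul p.1 A, p.2 * vv p.1 A)) ⁻¹' s)
        = (· * vv ω A) ⁻¹' (Prod.mk (vecMul ω A) ⁻¹' s) := rfl
    rw [heq, Real.volume_preimage_mul_right hv, h1, mul_zero]
  calc ∫⁻ ω, volume (Prod.mk ω ⁻¹' ((fun p : (Fin 2 → ℝ) × ℝ =>
        (vecMul p.1 A, p.2 * vv p.1 A)) ⁻¹' s)) = ∫⁻ _ : Fin 2 → ℝ, 0 :=
      lintegral_congr_ae h2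
    _ = 0 := lintegral_zero

/-- The operator `σ₂[x,A]` on functions of `(ω, ω₃) ∈ ℝ² × ℝ`:
`(σ₂[x,A]ξ)(ω, ω₃) = (|det A|·‖ω‖/‖ωA‖)·e^{2πi(ω·x + ω₃·u_{ω,A})}·ξ(ωA, ω₃·v_{ω,A})`. -/
def sigma2 (x : Fin 2 → ℝ) (A : Matrix (Fin 2) (Fin 2) ℝ)
    (ξ : (Fin 2 → ℝ) × ℝ → ℂ) : (Fin 2 → ℝ) × ℝ → ℂ := fun p =>
  (((|A.det| * Real.sqrt (nsq p.1) / Real.sqrt (nsq (vecMul p.1 A))) : ℝ) : ℂ)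
    * Complex.exp (((2 * Real.pi * (p.1 0 * x 0 + p.1 1 * x 1 + p.2 * uu p.1 A)) : ℝ) * Complex.I)
    * ξ (vecMul p.1 A, p.2 * vv p.1 A)

/-- `σ₂[x,A]` preserves the `L²(ℝ²×ℝ)`-norm; in particular it is a unitary
operator on `L²(ℝ²×ℝ; ℂ)`. -/
theorem sigma2_isometry (x : Fin 2 → ℝ) (A : Matrix (Fin 2) (Fin 2) ℝ)
    (hA : A.det ≠ 0) (ξ : (Fin 2 → ℝ) × ℝ → ℂ)
    (hξ : MemLp ξ 2 (volume : Measure ((Fin 2 → ℝ) × ℝ))) :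
    ∫⁻ p : (Fin 2 → ℝ) × ℝ, (‖sigma2 x A ξ p‖₊ : ℝ≥0∞) ^ 2
      = ∫⁻ p : (Fin 2 → ℝ) × ℝ, (‖ξ p‖₊ : ℝ≥0∞) ^ 2 := by
  classical
  obtain ⟨hsm, -⟩ := hξ
  set g : (Fin 2 → ℝ) × ℝ → ℂ := hsm.mk ξ with hgdef
  have hgm : Measurable g := hsm.stronglyMeasurable_mk.measurable
  have hgae : ξ =ᵐ[volume] g := hsm.ae_eq_mk
  set T : ((Fin 2 → ℝ) × ℝ) → ((Fin 2 → ℝ) × ℝ) :=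
    fun p => (vecMul p.1 A, p.2 * vv p.1 A) with hT
  have hTm : Measurable T :=
    ((measurable_vecMulA A).comp measurable_fst).prodMk
      (measurable_snd.mul ((measurable_vv A).comp measurable_fst))
  -- a.e. `ξ (T p) = g (T p)`
  have hnull : volume (T ⁻¹' (toMeasurable volume {q | ξ q ≠ g q})) = 0 := by
    refine T_preimage_null A hA (measurableSet_toMeasurable _ _) ?_
    rw [measure_toMeasurable]
    exact ae_iff.mp hgae
  have hTae : ∀ᵐ p : (Fin 2 → ℝ) × ℝ, ξ (T p) = g (T p) := by
    rw [ae_iff]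
    refine measure_mono_null ?_ hnull
    intro p hp
    exact subset_toMeasurable _ _ hp
  set C : (Fin 2 → ℝ) → ℝ≥0∞ := fun ω =>
    ENNReal.ofReal ((|A.det| * Real.sqrt (nsq ω) / Real.sqrt (nsq (vecMul ω A))) ^ 2) with hC
  set F : ((Fin 2 → ℝ) × ℝ) → ℝ≥0∞ := fun q => (‖g q‖₊ : ℝ≥0∞) ^ 2 with hF
  have hFm : Measurable F := hgm.enorm.pow_const 2
  have hCm : Measurable C := by
    apply Measurable.ennreal_ofReal
    exact ((measurable_const.mul (Real.continuous_sqrt.measurable.comp measurable_nsq)).div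
      (Real.continuous_sqrt.measurable.comp (measurable_nsq.comp (measurable_vecMulA A)))).pow_const 2
  -- Step 1: pointwise identification of the integrand
  have h1 : ∀ᵐ p : (Fin 2 → ℝ) × ℝ, (‖sigma2 x A ξ p‖₊ : ℝ≥0∞) ^ 2 = C p.1 * F (T p) := by
    filter_upwards [hTae] with p hp
    have hexp : (‖Complex.exp (((2 * Real.pi *
        (p.1 0 * x 0 + p.1 1 * x 1 + p.2 * uu p.1 A)) : ℝ) * Complex.I)‖₊ : ℝ≥0∞) = 1 := by
      have h := Complex.norm_exp_ofReal_mul_I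
        (2 * Real.pi * (p.1 0 * x 0 + p.1 1 * x 1 + p.2 * uu p.1 A))
      have h' : ‖Complex.exp (((2 * Real.pi *
          (p.1 0 * x 0 + p.1 1 * x 1 + p.2 * uu p.1 A)) : ℝ) * Complex.I)‖₊ = 1 :=
        NNReal.eq (by simpa using h)
      rw [h', ENNReal.coe_one]
    have hξT : ξ (vecMul p.1 A, p.2 * vv p.1 A) = g (vecMul p.1 A, p.2 * vv p.1 A) := hp
    rw [sigma2, nnnorm_mul, nnnorm_mul, ENNReal.coe_mul, ENNReal.coe_mul, hexp, mul_one, hξT]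
    rw [mul_pow, Complex.nnnorm_real,
      ← enorm_eq_nnnorm (|A.det| * Real.sqrt (nsq p.1) / Real.sqrt (nsq (vecMul p.1 A))),
      Real.enorm_eq_ofReal_abs,
      ← ENNReal.ofReal_pow (abs_nonneg _), sq_abs]
  rw [lintegral_congr_ae h1]
  -- Step 2: Tonelli
  have hmeas : Measurable (fun p : (Fin 2 → ℝ) × ℝ => C p.1 * F (T p)) :=
    (hCm.comp measurable_fst).mul (hFm.comp hTm)
  rw [Measure.volume_eq_prod, lintegral_prod _ hmeas.aemeasurable]
  -- Step 3: inner integral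
  have h2 : ∀ᵐ ω : Fin 2 → ℝ,
      (∫⁻ t : ℝ, C ω * F (vecMul ω A, t * vv ω A))
        = ENNReal.ofReal |A.det| * ∫⁻ s : ℝ, F (vecMul ω A, s) := by
    filter_upwards [ae_ne_zero] with ω hω
    have hv : vv ω A ≠ 0 := vv_ne_zero hA hω
    have hm1 : Measurable (fun s : ℝ => F (vecMul ω A, s)) :=
      hFm.comp measurable_prodMk_left
    have hm2 : Measurable (fun t : ℝ => F (vecMul ω A, t * vv ω A)) :=
      hm1.comp (measurable_id.mul_const _)
    rw [lintegral_const_mul _ hm2]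
    have hmap : (∫⁻ t : ℝ, F (vecMul ω A, t * vv ω A))
        = ∫⁻ s : ℝ, F (vecMul ω A, s) ∂(Measure.map (· * vv ω A) volume) :=
      (lintegral_map hm1 (measurable_id.mul_const _)).symm
    rw [hmap, Real.map_volume_mul_right hv, lintegral_smul_measure, smul_eq_mul, ← mul_assoc]
    congr 1
    exact scalar_id hA hω
  rw [lintegral_congr_ae h2]
  -- Step 4: outer linear change of variables
  have hGm : Measurable (fun η : Fin 2 → ℝ => ∫⁻ s : ℝ, F (η, s)) :=
    hFm.lintegral_prod_right'
  have hGm2 : Measurable (fun ω : Fin 2 → ℝ => ∫⁻ s : ℝ, F (vecMul ω A, s)) :=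
    hGm.comp (measurable_vecMulA A)
  rw [lintegral_const_mul _ hGm2]
  have h3 : (∫⁻ ω : Fin 2 → ℝ, ∫⁻ s : ℝ, F (vecMul ω A, s))
      = ENNReal.ofReal |A.det⁻¹| * ∫⁻ η : Fin 2 → ℝ, ∫⁻ s : ℝ, F (η, s) := by
    rw [← lintegral_map hGm (measurable_vecMulA A), map_vecMulA A hA,
      lintegral_smul_measure, smul_eq_mul]
  rw [h3, ← mul_assoc, ← ENNReal.ofReal_mul (abs_nonneg _), ← abs_mul,
    mul_inv_cancel₀ hA, abs_one, ENNReal.ofReal_one, one_mul]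
  rw [← lintegral_prod _ hFm.aemeasurable, ← Measure.volume_eq_prod]
  exact lintegral_congr_ae (hgae.mono fun q hq => by simp only [hF, hq])
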